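/- Let n be a positive integer, let A and B be n×n row-stochastic real matrices, let 0 < c < 1, let ε > 0, and let r_old ∈ ℝⁿ satisfy ‖r_old‖₁ = 1. Define q_offset = (1−c)·(Bᵀ − Aᵀ)·r_old. If k is a natural number such that (1−c)^k ≤ ε/(2(1−c)), then the error incurred by truncating the offset series after k terms satisfies ‖∑_{i=k}^∞ ((1−c)·Bᵀ)^i · q_offset‖₁ ≤ ε/c. That is, when OSP-T converges under error tolerance ε, the ℓ1 error of its output RWR score vector is at most ε/c. (Theorem 3: Error bound of OSP-T.) -/

import Mathlib

open Matrix

/-- An `n × n` real matrix is row-stochastic if all its entries are nonnegative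
and each of its rows sums to `1`. -/
def RowStochastic {n : ℕ} (M : Matrix (Fin n) (Fin n) ℝ) : Prop :=
  (∀ i j, 0 ≤ M i j) ∧ ∀ i, ∑ j, M i j = 1

/-- The ℓ1 norm of a vector in `ℝⁿ`: the sum of absolute values of entries. -/
def l1norm {n : ℕ} (v : Fin n → ℝ) : ℝ := ∑ i, |v i|

lemma l1norm_nonneg {n : ℕ} (v : Fin n → ℝ) : 0 ≤ l1norm v :=
  Finset.sum_nonneg fun _ _ => abs_nonneg _

lemma rowStochastic_pow {n : ℕ} {M : Matrix (Fin n) (Fin n) ℝ} (hM : RowStochastic M)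
    (m : ℕ) : RowStochastic (M ^ (m + 1)) := by
  induction m with
  | zero => simpa using hM
  | succ m ih =>
    constructor
    · intro i j
      rw [pow_succ, Matrix.mul_apply]
      exact Finset.sum_nonneg fun l _ => mul_nonneg (ih.1 i l) (hM.1 l j)
    · intro i
      rw [pow_succ]
      simp only [Matrix.mul_apply]
      rw [Finset.sum_comm]
      calc ∑ l, ∑ j, (M ^ (m+1)) i l * M l j
          = ∑ l, (M ^ (m+1)) i l * ∑ j, M l j := by
            simp [Finset.mul_sum]
        _ = 1 := by simp [hM.2, ih.2 i]

lemma l1_mulVec_transpose_le {n : ℕ} {M : Matrix (Fin n) (Fin n) ℝ}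
    (hM : RowStochastic M) (v : Fin n → ℝ) :
    l1norm (Mᵀ.mulVec v) ≤ l1norm v := by
  unfold l1norm
  calc ∑ i, |Mᵀ.mulVec v i| ≤ ∑ i, ∑ j, M j i * |v j| := by
        apply Finset.sum_le_sum
        intro i _
        rw [Matrix.mulVec, dotProduct]
        refine (Finset.abs_sum_le_sum_abs _ _).trans ?_
        apply Finset.sum_le_sum
        intro j _
        rw [Matrix.transpose_apply, abs_mul, abs_of_nonneg (hM.1 j i)]
    _ = ∑ j, (∑ i, M j i) * |v j| := by rw [Finset.sum_comm]; simp [Finset.sum_mul]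
    _ = ∑ j, |v j| := by simp [hM.2]

lemma l1_smul {n : ℕ} (a : ℝ) (v : Fin n → ℝ) : l1norm (a • v) = |a| * l1norm v := by
  unfold l1norm
  simp [abs_mul, Finset.mul_sum]

lemma l1_term_le {n : ℕ} {B : Matrix (Fin n) (Fin n) ℝ} (hB : RowStochastic B)
    {c : ℝ} (hc0 : 0 < c) (hc1 : c < 1) (q : Fin n → ℝ) (m : ℕ) :
    l1norm ((((1 - c) • Bᵀ) ^ m).mulVec q) ≤ (1 - c) ^ m * l1norm q := by
  have h1c : (0:ℝ) ≤ 1 - c := by linarith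
  rw [smul_pow, Matrix.smul_mulVec, l1_smul, abs_of_nonneg (pow_nonneg h1c m)]
  apply mul_le_mul_of_nonneg_left _ (pow_nonneg h1c m)
  cases m with
  | zero => simp
  | succ m =>
    rw [← Matrix.transpose_pow]
    exact l1_mulVec_transpose_le (rowStochastic_pow hB m) q

/-- Theorem 3 (Error bound of OSP-T): if `(1-c)^k ≤ ε / (2(1-c))`, then the
truncation error `‖∑_{i=k}^∞ ((1-c)Bᵀ)^i q_offset‖₁` is at most `ε / c`. -/
theorem stmt_8 {n : ℕ} (hn : 0 < n) (A B : Matrix (Fin n) (Fin n) ℝ)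
    (hA : RowStochastic A) (hB : RowStochastic B)
    (c : ℝ) (hc0 : 0 < c) (hc1 : c < 1) (ε : ℝ) (hε : 0 < ε)
    (rold : Fin n → ℝ) (hrold : l1norm rold = 1)
    (qoffset : Fin n → ℝ)
    (hqoffset : qoffset = (1 - c) • (Bᵀ - Aᵀ).mulVec rold)
    (k : ℕ) (hk : (1 - c) ^ k ≤ ε / (2 * (1 - c))) :
    l1norm (∑' i : ℕ, (((1 - c) • Bᵀ) ^ (k + i)).mulVec qoffset) ≤ ε / c := by
  have h1c : (0:ℝ) < 1 - c := by linarith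
  -- bound on l1norm qoffset
  have hq : l1norm qoffset ≤ 2 * (1 - c) := by
    rw [hqoffset, l1_smul, abs_of_nonneg h1c.le]
    rw [mul_comm]
    apply mul_le_mul_of_nonneg_right _ h1c.le
    have : (Bᵀ - Aᵀ).mulVec rold = Bᵀ.mulVec rold - Aᵀ.mulVec rold := by
      rw [Matrix.sub_mulVec]
    rw [this]
    have hBle := l1_mulVec_transpose_le hB rold
    have hAle := l1_mulVec_transpose_le hA rold
    calc l1norm (Bᵀ.mulVec rold - Aᵀ.mulVec rold)
        ≤ l1norm (Bᵀ.mulVec rold) + l1norm (Aᵀ.mulVec rold) := by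
          unfold l1norm
          rw [← Finset.sum_add_distrib]
          apply Finset.sum_le_sum
          intro i _
          exact (abs_sub _ _)
      _ ≤ 2 := by rw [hrold] at hBle hAle; linarith
  set f : ℕ → (Fin n → ℝ) := fun i => (((1 - c) • Bᵀ) ^ (k + i)).mulVec qoffset with hf
  have hterm : ∀ i, l1norm (f i) ≤ (1 - c) ^ (k + i) * (2 * (1 - c)) := fun i =>
    (l1_term_le hB hc0 hc1 qoffset (k + i)).trans
      (mul_le_mul_of_nonneg_left hq (pow_nonneg h1c.le _))
  have habs : ∀ i j, |f i j| ≤ (1 - c) ^ (k + i) * (2 * (1 - c)) := by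
    intro i j
    refine le_trans ?_ (hterm i)
    exact Finset.single_le_sum (f := fun j => |f i j|) (fun j _ => abs_nonneg _)
      (Finset.mem_univ j)
  have hgsum : Summable (fun i : ℕ => (1 - c) ^ (k + i) * (2 * (1 - c))) := by
    simp_rw [pow_add]
    exact ((summable_geometric_of_lt_one h1c.le (by linarith)).mul_left _).mul_right _
  have habssum : ∀ j, Summable (fun i => |f i j|) :=
    fun j => hgsum.of_nonneg_of_le (fun i => abs_nonneg _) (fun i => habs i j)
  have hptsum : ∀ j, Summable (fun i => f i j) := fun j => (habssum j).of_abs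
  have hsumF : Summable f := by
    rw [Pi.summable]
    exact hptsum
  have hl1sum : Summable (fun i => l1norm (f i)) :=
    hgsum.of_nonneg_of_le (fun i => l1norm_nonneg _) hterm
  have key : l1norm (∑' i, f i) ≤ ∑' i, (1 - c) ^ (k + i) * (2 * (1 - c)) := by
    calc l1norm (∑' i, f i) = ∑ j, |∑' i, f i j| := by
          unfold l1norm
          exact Finset.sum_congr rfl fun j _ => by rw [tsum_apply hsumF]
      _ ≤ ∑ j, ∑' i, |f i j| := by
          apply Finset.sum_le_sum
          intro j _
          have := norm_tsum_le_tsum_norm (f := fun i => f i j)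
            (by simpa [Real.norm_eq_abs] using habssum j)
          simpa [Real.norm_eq_abs] using this
      _ = ∑' i, ∑ j, |f i j| := (Summable.tsum_finsetSum (fun j _ => habssum j)).symm
      _ = ∑' i, l1norm (f i) := rfl
      _ ≤ ∑' i, (1 - c) ^ (k + i) * (2 * (1 - c)) := Summable.tsum_le_tsum hterm hl1sum hgsum
  have hts : ∑' i : ℕ, (1 - c) ^ (k + i) * (2 * (1 - c))
      = (1 - c) ^ k * c⁻¹ * (2 * (1 - c)) := by
    simp_rw [pow_add]
    rw [tsum_mul_right, tsum_mul_left, tsum_geometric_of_lt_one h1c.le (by linarith)]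
    have h : (1 : ℝ) - (1 - c) = c := by ring
    rw [h]
  rw [hts] at key
  refine key.trans ?_
  have hfin : (1 - c) ^ k * c⁻¹ * (2 * (1 - c)) ≤ ε / (2 * (1 - c)) * c⁻¹ * (2 * (1 - c)) := by
    gcongr
  refine hfin.trans_eq ?_
  field_simp
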